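/- For every finite group G, lim_{r→∞} |Comm_r(G)|^{1/r} = m(G), the maximum order of an abelian subgroup of G. Equivalently, lim_{r→∞} P_r(G)^{1/r} = m(G)/|G|. -/

import Mathlib

/-- The set of `r`-tuples of pairwise commuting elements of `G`. -/
def CommTuple (r : ℕ) (G : Type*) [Group G] : Type _ :=
  {x : Fin r → G // ∀ i j, Commute (x i) (x j)}

/-- `P r G = |Comm_r(G)| / |G|^r`. -/
noncomputable def P (r : ℕ) (G : Type*) [Group G] : ℝ :=
  (Nat.card (CommTuple r G) : ℝ) / (Nat.card G : ℝ) ^ r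

/-- A subgroup is abelian if all its elements commute. -/
def IsAbelianSubgroup {G : Type*} [Group G] (A : Subgroup G) : Prop :=
  ∀ x y : A, x * y = y * x

/-- `mG G`: maximum order of an abelian subgroup of `G`. -/
noncomputable def mG (G : Type*) [Group G] : ℕ :=
  sSup {n : ℕ | ∃ A : Subgroup G, IsAbelianSubgroup A ∧ Nat.card A = n}

/-- `Nmax G`: number of abelian subgroups of maximum order. -/
noncomputable def Nmax (G : Type*) [Group G] : ℕ :=
  Nat.card {A : Subgroup G // IsAbelianSubgroup A ∧ Nat.card A = mG G}

/-- `bG G`: second-largest order of an abelian subgroup. -/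
noncomputable def bG (G : Type*) [Group G] : ℕ :=
  sSup {n : ℕ | ∃ A : Subgroup G, IsAbelianSubgroup A ∧ Nat.card A = n ∧ n < mG G}

instance (r : ℕ) (G : Type*) [Group G] [Finite G] : Finite (CommTuple r G) :=
  inferInstanceAs (Finite {x : Fin r → G // ∀ i j, Commute (x i) (x j)})

section aux
variable (G : Type*) [Group G] [Fintype G]

lemma mG_mem : mG G ∈ {n : ℕ | ∃ A : Subgroup G, IsAbelianSubgroup A ∧ Nat.card A = n} := by
  apply Nat.sSup_mem
  · exact ⟨1, ⊥, fun x y => Subsingleton.elim _ _, Subgroup.card_bot⟩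
  · exact ⟨Nat.card G, fun n ⟨A, _, hA⟩ => hA ▸ Subgroup.card_le_card_group A⟩

lemma card_le_mG (A : Subgroup G) (hA : IsAbelianSubgroup A) : Nat.card A ≤ mG G :=
  le_csSup ⟨Nat.card G, fun n ⟨A, _, hA⟩ => hA ▸ Subgroup.card_le_card_group A⟩ ⟨A, hA, rfl⟩

lemma one_le_mG : 1 ≤ mG G :=
  le_csSup ⟨Nat.card G, fun n ⟨A, _, hA⟩ => hA ▸ Subgroup.card_le_card_group A⟩
    ⟨⊥, fun x y => Subsingleton.elim _ _, Subgroup.card_bot⟩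

lemma lower (r : ℕ) : (mG G) ^ r ≤ Nat.card (CommTuple r G) := by
  obtain ⟨A, hA, hcard⟩ := mG_mem G
  have : Nat.card (Fin r → A) ≤ Nat.card (CommTuple r G) := by
    apply Nat.card_le_card_of_injective (fun x => ⟨fun i => (x i : G), fun i j => by
      have := congrArg Subtype.val (hA (x i) (x j))
      simpa [Commute, SemiconjBy] using this⟩)
    intro x y h
    funext i
    exact Subtype.ext (congrFun (congrArg Subtype.val h) i)
  rwa [Nat.card_pi, Finset.prod_const, Finset.card_univ, Fintype.card_fin, hcard] at this

lemma upper (r : ℕ) :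
    Nat.card (CommTuple r G) ≤ Nat.card {A : Subgroup G // IsAbelianSubgroup A} * (mG G) ^ r := by
  classical
  letI : Fintype (Subgroup G) := Fintype.ofFinite _
  set S := {A : Subgroup G // IsAbelianSubgroup A}
  have hsurj : Function.Surjective
      (fun p : Σ A : S, (Fin r → A.1) => (⟨fun i => ((p.2 i : G)), fun i j => by
        have := congrArg Subtype.val (p.1.2 (p.2 i) (p.2 j))
        simpa [Commute, SemiconjBy] using this⟩ : CommTuple r G)) := by
    rintro ⟨x, hx⟩
    have habel : IsAbelianSubgroup (Subgroup.closure (Set.range x)) := by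
      intro a b
      letI := Subgroup.closureCommGroupOfComm (k := Set.range x) (by
        rintro _ ⟨i, rfl⟩ _ ⟨j, rfl⟩; exact hx i j)
      exact mul_comm a b
    have hmem : ∀ i, x i ∈ Subgroup.closure (Set.range x) := fun i =>
      Subgroup.subset_closure ⟨i, rfl⟩
    exact ⟨⟨⟨_, habel⟩, fun i => ⟨x i, hmem i⟩⟩, rfl⟩
  have h1 := Nat.card_le_card_of_surjective _ hsurj
  refine h1.trans ?_
  rw [Nat.card_eq_fintype_card, Fintype.card_sigma]
  calc ∑ A : S, Fintype.card (Fin r → A.1)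
      ≤ ∑ _A : S, (mG G) ^ r := by
        apply Finset.sum_le_sum
        intro A _
        rw [Fintype.card_fun, Fintype.card_fin]
        exact Nat.pow_le_pow_left (by rw [← Nat.card_eq_fintype_card]; exact card_le_mG G A.1 A.2) r
    _ = Nat.card S * (mG G) ^ r := by
        rw [Finset.sum_const, Finset.card_univ, smul_eq_mul, Nat.card_eq_fintype_card]

end aux

open Filter Real in
lemma pow_rpow_inv {x : ℝ} (hx : 0 ≤ x) {r : ℕ} (hr : r ≠ 0) :
    (x ^ r) ^ ((r : ℝ)⁻¹) = x := by
  rw [← Real.rpow_natCast x r, ← Real.rpow_mul hx,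
    mul_inv_cancel₀ (by exact_mod_cast hr), Real.rpow_one]


open Filter Real in
theorem stmt10 (G : Type*) [Group G] [Fintype G] :
    Filter.Tendsto
        (fun r : ℕ => (Nat.card (CommTuple r G) : ℝ) ^ ((r : ℝ)⁻¹))
        Filter.atTop (nhds (mG G : ℝ)) ∧
      Filter.Tendsto (fun r : ℕ => P r G ^ ((r : ℝ)⁻¹))
        Filter.atTop (nhds ((mG G : ℝ) / (Nat.card G : ℝ))) := by
  set m : ℝ := (mG G : ℝ) with hm_def
  set N : ℕ := Nat.card {A : Subgroup G // IsAbelianSubgroup A} with hN_def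
  have hm1 : (1 : ℝ) ≤ m := by rw [hm_def]; exact_mod_cast one_le_mG G
  have hm0 : (0 : ℝ) ≤ m := zero_le_one.trans hm1
  have : Nonempty {A : Subgroup G // IsAbelianSubgroup A} :=
    ⟨⟨⊥, fun x y => Subsingleton.elim _ _⟩⟩
  have hN0 : 0 < N := hN_def ▸ Nat.card_pos
  have hNR : (0 : ℝ) < N := by exact_mod_cast hN0
  have hinv : Tendsto (fun r : ℕ => ((r : ℝ))⁻¹) atTop (nhds 0) :=
    tendsto_inv_atTop_zero.comp tendsto_natCast_atTop_atTop
  have hNlim : Tendsto (fun r : ℕ => (N : ℝ) ^ ((r : ℝ)⁻¹)) atTop (nhds 1) := by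
    have hc : ContinuousAt (fun x : ℝ => (N : ℝ) ^ x) 0 :=
      Real.continuousAt_const_rpow hNR.ne'
    have := hc.tendsto.comp hinv
    simpa [Function.comp_def] using this
  have hupperlim : Tendsto (fun r : ℕ => (N : ℝ) ^ ((r : ℝ)⁻¹) * m) atTop (nhds m) := by
    simpa using hNlim.mul_const m
  have hlow : ∀ᶠ r : ℕ in atTop,
      m ≤ (Nat.card (CommTuple r G) : ℝ) ^ ((r : ℝ)⁻¹) := by
    filter_upwards [eventually_ge_atTop 1] with r hr
    have h := lower G r
    have h' : (m ^ r : ℝ) ≤ (Nat.card (CommTuple r G) : ℝ) := by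
      rw [hm_def]; exact_mod_cast h
    calc m = (m ^ r) ^ ((r : ℝ)⁻¹) := (pow_rpow_inv hm0 (by omega)).symm
      _ ≤ _ := Real.rpow_le_rpow (by positivity) h' (by positivity)
  have hhigh : ∀ᶠ r : ℕ in atTop,
      (Nat.card (CommTuple r G) : ℝ) ^ ((r : ℝ)⁻¹) ≤ (N : ℝ) ^ ((r : ℝ)⁻¹) * m := by
    filter_upwards [eventually_ge_atTop 1] with r hr
    have h := upper G r
    have h' : (Nat.card (CommTuple r G) : ℝ) ≤ (N : ℝ) * m ^ r := by
      rw [hm_def, hN_def]; exact_mod_cast h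
    calc (Nat.card (CommTuple r G) : ℝ) ^ ((r : ℝ)⁻¹)
        ≤ ((N : ℝ) * m ^ r) ^ ((r : ℝ)⁻¹) :=
          Real.rpow_le_rpow (by positivity) h' (by positivity)
      _ = (N : ℝ) ^ ((r : ℝ)⁻¹) * (m ^ r) ^ ((r : ℝ)⁻¹) :=
          Real.mul_rpow hNR.le (by positivity)
      _ = (N : ℝ) ^ ((r : ℝ)⁻¹) * m := by rw [pow_rpow_inv hm0 (by omega)]
  have h1 : Tendsto (fun r : ℕ => (Nat.card (CommTuple r G) : ℝ) ^ ((r : ℝ)⁻¹))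
      atTop (nhds m) :=
    tendsto_of_tendsto_of_tendsto_of_le_of_le' tendsto_const_nhds hupperlim hlow hhigh
  refine ⟨h1, ?_⟩
  have hg : (0 : ℝ) < (Nat.card G : ℝ) := by
    exact_mod_cast Nat.card_pos (α := G)
  have h2 := h1.div_const (Nat.card G : ℝ)
  refine h2.congr' ?_
  filter_upwards [eventually_ge_atTop 1] with r hr
  rw [P, Real.div_rpow (by positivity) (by positivity), pow_rpow_inv hg.le (by omega)]
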